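/- Let f : X → ℝ be Hölder continuous admitting a unique maximizing measure, let V be a calibrated subaction for f, and set R = R_− = f + V − V∘σ − β(f). For each c > 0 let h_c : X → (0,∞) be continuous and β_c > 0 be such that g_c := c f + log h_c − log h_c∘σ − log β_c satisfies (L_{g_c} 1)(x) = 1 for all x ∈ X; assume sup_{x∈X} |log h_c(x) − c V(x)| / c → 0 as c → ∞, and that ε_c := log β_c − c β(f) satisfies ε_c / c → 0. Then for every fixed x ∈ X, lim_{c,n→∞} ( (1/c) log (L_{cR}^n 1)(x) − n ε_c / c ) = 0. -/

import Mathlib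

open MeasureTheory Filter Topology Set ENNReal

noncomputable section

namespace GXY

variable {M : Type*}

/-- The shift map on the sequence space `ℕ → M`. -/
def shift (x : ℕ → M) : ℕ → M := fun n => x (n + 1)

/-- Prepending a symbol `a` to a sequence `x`. -/
def cons (a : M) (x : ℕ → M) : ℕ → M := fun n => Nat.casesOn n a x

/-- The metric `d(x,y) = ∑ θ^n d_M(x_n, y_n)` on `ℕ → M`. -/
def D [MetricSpace M] (θ : ℝ) (x y : ℕ → M) : ℝ := ∑' n, θ ^ n * dist (x n) (y n)

/-- Hölder continuity with respect to the metric `D θ`. -/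
def IsHolder [MetricSpace M] (θ : ℝ) (f : (ℕ → M) → ℝ) : Prop :=
  ∃ C > (0 : ℝ), ∃ α ∈ Set.Ioc (0 : ℝ) 1, ∀ x y, |f x - f y| ≤ C * (D θ x y) ^ α

/-- Shift-invariant Borel probability measures on `ℕ → M`. -/
def IsInvProb [MetricSpace M] [MeasurableSpace M] (μ : Measure (ℕ → M)) : Prop :=
  IsProbabilityMeasure μ ∧ μ.map shift = μ

/-- The maximal ergodic average `β(f)`. -/
def betaF [MetricSpace M] [MeasurableSpace M] (f : (ℕ → M) → ℝ) : ℝ :=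
  sSup { r | ∃ μ : Measure (ℕ → M), IsInvProb μ ∧ r = ∫ x, f x ∂μ }

/-- A maximizing measure for `f`. -/
def IsMaximizing [MetricSpace M] [MeasurableSpace M] (f : (ℕ → M) → ℝ)
    (μ : Measure (ℕ → M)) : Prop :=
  IsInvProb μ ∧ ∫ x, f x ∂μ = betaF f

/-- A calibrated subaction `V` for `f`:
`V y = max_{σ x = y} (f x + V x - β f)` for every `y`. -/
def IsCalibrated [MetricSpace M] [MeasurableSpace M] (f V : (ℕ → M) → ℝ) : Prop :=
  Continuous V ∧
    ∀ y, IsGreatest { t | ∃ x, shift x = y ∧ t = f x + V x - betaF f } (V y)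

/-- The Ruelle transfer operator `(L_g w)(x) = ∫_M e^{g(ax)} w(ax) dm(a)`. -/
def Ruelle [MetricSpace M] [MeasurableSpace M] (m : Measure M) (g w : (ℕ → M) → ℝ) :
    (ℕ → M) → ℝ :=
  fun x => ∫ a, Real.exp (g (cons a x)) * w (cons a x) ∂m

/-- `R₊ = β(f) + V ∘ σ - V - f ≥ 0`. -/
def Rplus [MetricSpace M] [MeasurableSpace M] (f V : (ℕ → M) → ℝ) (x : ℕ → M) : ℝ :=
  betaF f + V (shift x) - V x - f x

/-- `R₊^∞(z) = ∑_{j≥0} R₊(σ^j z) ∈ [0,∞]`. -/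
def RplusInf [MetricSpace M] [MeasurableSpace M] (f V : (ℕ → M) → ℝ) (z : ℕ → M) : ℝ≥0∞ :=
  ∑' j : ℕ, ENNReal.ofReal (Rplus f V (shift^[j] z))

/-- `R₋ = f + V - V ∘ σ - β(f) ≤ 0`. -/
def Rminus [MetricSpace M] [MeasurableSpace M] (f V : (ℕ → M) → ℝ) (x : ℕ → M) : ℝ :=
  f x + V x - V (shift x) - betaF f

/-- The Birkhoff sum `R₋^k = ∑_{j<k} R₋ ∘ σ^j`. -/
def RminusBirk [MetricSpace M] [MeasurableSpace M] (f V : (ℕ → M) → ℝ) (k : ℕ)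
    (z : ℕ → M) : ℝ :=
  ∑ j ∈ Finset.range k, Rminus f V (shift^[j] z)

/-- Extended-real logarithm with the convention `log 0 = -∞`. -/
def elog (t : ℝ) : EReal := if t = 0 then ⊥ else ((Real.log t : ℝ) : EReal)

section AuxLemmas

lemma shift_cons (a : M) (x : ℕ → M) : shift (cons a x) = x := rfl

variable [MetricSpace M]

lemma continuous_shift : Continuous (shift : (ℕ → M) → ℕ → M) :=
  continuous_pi fun n => continuous_apply (n + 1)

lemma continuous_cons_left (x : ℕ → M) : Continuous fun a : M => cons a x :=
  continuous_pi fun n => by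
    cases n with
    | zero => exact continuous_id
    | succ n => exact continuous_const

lemma continuous_cons_right (a : M) : Continuous fun x : ℕ → M => cons a x :=
  continuous_pi fun n => by
    cases n with
    | zero => exact continuous_const
    | succ n => exact continuous_apply n

lemma holder_continuous (hdiam : ∀ a b : M, dist a b ≤ 1)
    {θ : ℝ} (hθ : θ ∈ Set.Ioo (0 : ℝ) 1) {f : (ℕ → M) → ℝ} (hf : IsHolder θ f) :
    Continuous f := by
  obtain ⟨C, hC, α, hα, hH⟩ := hf
  rw [continuous_iff_continuousAt]
  intro x
  have hDc : Continuous (fun y : ℕ → M => D θ x y) := by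
    apply continuous_tsum (u := fun n => θ ^ n)
    · intro n
      exact continuous_const.mul (continuous_const.dist (continuous_apply n))
    · exact summable_geometric_of_lt_one hθ.1.le hθ.2
    · intro n y
      rw [Real.norm_eq_abs, abs_mul, abs_of_nonneg (pow_nonneg hθ.1.le n),
        abs_of_nonneg dist_nonneg]
      have : dist (x n) (y n) ≤ 1 := hdiam _ _
      nlinarith [pow_nonneg hθ.1.le n]
  have hDxx : D θ x x = 0 := by simp [D]
  have h1 : Tendsto (fun y => D θ x y) (𝓝 x) (𝓝 0) := by
    have := hDc.continuousAt (x := x)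
    rwa [ContinuousAt, hDxx] at this
  have hrc : ContinuousAt (fun t : ℝ => C * t ^ α) 0 :=
    continuousAt_const.mul (Real.continuousAt_rpow_const 0 α (Or.inr hα.1.le))
  have h2 : Tendsto (fun y => C * D θ x y ^ α) (𝓝 x) (𝓝 0) := by
    have := hrc.tendsto.comp h1
    simpa [Function.comp_def, Real.zero_rpow (ne_of_gt hα.1)] using this
  have h3 : Tendsto (fun y => |f y - f x|) (𝓝 x) (𝓝 0) := by
    apply squeeze_zero (fun y => abs_nonneg _) (fun y => ?_) h2
    rw [abs_sub_comm]
    exact hH x y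
  rw [ContinuousAt, tendsto_iff_dist_tendsto_zero]
  simpa [Real.dist_eq] using h3

lemma cont_integrable {α : Type*} [TopologicalSpace α] [CompactSpace α] [T2Space α]
    [MeasurableSpace α] [OpensMeasurableSpace α] {μ : Measure α} [IsFiniteMeasure μ]
    {f : α → ℝ} (hf : Continuous f) : Integrable f μ := by
  have := hf.continuousOn.integrableOn_compact (μ := μ) isCompact_univ
  rwa [integrableOn_univ] at this

lemma key [CompactSpace M] [MeasurableSpace M] [BorelSpace M]
    (m : Measure M) [IsProbabilityMeasure m]
    (R g φ : (ℕ → M) → ℝ) (ε B : ℝ)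
    (hR : Continuous R) (hg : Continuous g) (hφ : Continuous φ)
    (hφB : ∀ z, |φ z| ≤ B)
    (hRg : ∀ a y, R (cons a y) = g (cons a y) + φ y - φ (cons a y) + ε)
    (hnorm : ∀ y, ∫ a, Real.exp (g (cons a y)) ∂m = 1) :
    ∀ n : ℕ, Continuous ((Ruelle m R)^[n] (fun _ => 1)) ∧
      ∀ x, (Ruelle m R)^[n] (fun _ => 1) x ∈
        Set.Icc (Real.exp ((n : ℝ) * ε + φ x - B)) (Real.exp ((n : ℝ) * ε + φ x + B)) := by
  intro n
  induction n with
  | zero =>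
    constructor
    · simpa using (continuous_const : Continuous fun _ : ℕ → M => (1 : ℝ))
    · intro x
      obtain ⟨h1, h2⟩ := abs_le.mp (hφB x)
      simp only [Function.iterate_zero, id_eq, Nat.cast_zero, zero_mul, zero_add, Set.mem_Icc]
      constructor
      · rw [show (1 : ℝ) = Real.exp 0 by simp]
        exact Real.exp_le_exp.mpr (by linarith)
      · rw [show (1 : ℝ) = Real.exp 0 by simp]
        exact Real.exp_le_exp.mpr (by linarith)
  | succ n ih =>
    obtain ⟨hwc, hwb⟩ := ih
    set w := (Ruelle m R)^[n] (fun _ => 1) with hw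
    have hiter : (Ruelle m R)^[n + 1] (fun _ => 1) = Ruelle m R w := by
      rw [Function.iterate_succ']; rfl
    have hwpos : ∀ z, 0 < w z := fun z => lt_of_lt_of_le (Real.exp_pos _) (hwb z).1
    have hcont1 : ∀ x : ℕ → M,
        Continuous fun a : M => Real.exp (R (cons a x)) * w (cons a x) := fun x =>
      ((hR.comp (continuous_cons_left x)).rexp).mul (hwc.comp (continuous_cons_left x))
    constructor
    · rw [hiter]
      obtain ⟨K, hK⟩ := isCompact_univ.exists_bound_of_continuousOn
        ((hR.rexp.mul hwc)).continuousOn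
      apply continuous_of_dominated (bound := fun _ => K)
      · intro x
        exact (hcont1 x).aestronglyMeasurable
      · intro x
        exact Eventually.of_forall fun a => hK _ (mem_univ _)
      · exact integrable_const K
      · refine Eventually.of_forall fun a => ?_
        exact ((hR.comp (continuous_cons_right a)).rexp).mul (hwc.comp (continuous_cons_right a))
    · intro x
      rw [hiter]
      have hgx : Integrable (fun a => Real.exp (g (cons a x))) m :=
        cont_integrable ((hg.comp (continuous_cons_left x)).rexp)
      have hub : ∀ a, Real.exp (R (cons a x)) * w (cons a x)
          ≤ Real.exp (g (cons a x)) * Real.exp (((n : ℝ) + 1) * ε + φ x + B) := by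
        intro a
        calc Real.exp (R (cons a x)) * w (cons a x)
            ≤ Real.exp (R (cons a x)) * Real.exp ((n : ℝ) * ε + φ (cons a x) + B) :=
              mul_le_mul_of_nonneg_left (hwb (cons a x)).2 (Real.exp_pos _).le
          _ = Real.exp (g (cons a x)) * Real.exp (((n : ℝ) + 1) * ε + φ x + B) := by
              rw [← Real.exp_add, ← Real.exp_add, hRg a x]; congr 1; ring
      have hlb : ∀ a, Real.exp (g (cons a x)) * Real.exp (((n : ℝ) + 1) * ε + φ x - B)
          ≤ Real.exp (R (cons a x)) * w (cons a x) := by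
        intro a
        calc Real.exp (g (cons a x)) * Real.exp (((n : ℝ) + 1) * ε + φ x - B)
            = Real.exp (R (cons a x)) * Real.exp ((n : ℝ) * ε + φ (cons a x) - B) := by
              rw [← Real.exp_add, ← Real.exp_add, hRg a x]; congr 1; ring
          _ ≤ Real.exp (R (cons a x)) * w (cons a x) :=
              mul_le_mul_of_nonneg_left (hwb (cons a x)).1 (Real.exp_pos _).le
      have hint : Integrable (fun a => Real.exp (R (cons a x)) * w (cons a x)) m :=
        cont_integrable (hcont1 x)
      constructor
      · have := integral_mono_of_nonneg
          (Eventually.of_forall fun a =>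
            mul_nonneg (Real.exp_pos _).le (Real.exp_pos _).le)
          hint (Eventually.of_forall hlb)
        rw [integral_mul_const, hnorm x, one_mul] at this
        simpa [Ruelle, Nat.cast_succ] using this
      · have := integral_mono_of_nonneg
          (Eventually.of_forall fun a =>
            mul_nonneg (Real.exp_pos _).le (hwpos _).le)
          (hgx.mul_const _) (Eventually.of_forall hub)
        rw [integral_mul_const, hnorm x, one_mul] at this
        simpa [Ruelle, Nat.cast_succ] using this


end AuxLemmas

theorem asymptotics_of_iterated_cR_operator
    [MetricSpace M] [CompactSpace M] [ConnectedSpace M] [MeasurableSpace M] [BorelSpace M]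
    (hdiam : ∀ a b : M, dist a b ≤ 1)
    (θ : ℝ) (hθ : θ ∈ Set.Ioo (0 : ℝ) 1)
    (m : Measure M) [IsProbabilityMeasure m]
    (f V : (ℕ → M) → ℝ) (hf : IsHolder θ f)
    (huniq : ∃! μ : Measure (ℕ → M), IsMaximizing f μ)
    (hV : IsCalibrated f V)
    (h : ℝ → (ℕ → M) → ℝ) (hhpos : ∀ c > (0 : ℝ), ∀ x, 0 < h c x)
    (hhcont : ∀ c > (0 : ℝ), Continuous (h c))
    (βc : ℝ → ℝ) (hβc : ∀ c > (0 : ℝ), 0 < βc c)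
    (g : ℝ → (ℕ → M) → ℝ)
    (hg : ∀ c > (0 : ℝ), ∀ x, g c x =
      c * f x + Real.log (h c x) - Real.log (h c (shift x)) - Real.log (βc c))
    (hnorm : ∀ c > (0 : ℝ), ∀ x, Ruelle m (g c) (fun _ => 1) x = 1)
    (hsub : ∀ ε > (0 : ℝ), ∃ N : ℝ, ∀ c > N, ∀ x, |Real.log (h c x) - c * V x| / c < ε)
    (hεc : Tendsto (fun c => (Real.log (βc c) - c * betaF f) / c) atTop (nhds 0))
    :
    ∀ x : ℕ → M, ∀ ε > (0 : ℝ), ∃ N : ℝ, ∀ c > N, ∀ n : ℕ, (n : ℝ) > N →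
      |(1 / c) * Real.log ((Ruelle m (fun z => c * Rminus f V z))^[n] (fun _ => 1) x)
        - (n : ℝ) * (Real.log (βc c) - c * betaF f) / c - 0| < ε := by
  intro x ε hε
  obtain ⟨N₀, hN₀⟩ := hsub (ε / 4) (by positivity)
  refine ⟨max N₀ 0, fun c hc n _ => ?_⟩
  have hc0 : (0 : ℝ) < c := lt_of_le_of_lt (le_max_right N₀ 0) hc
  have hcN : c > N₀ := lt_of_le_of_lt (le_max_left N₀ 0) hc
  set εc := Real.log (βc c) - c * betaF f with hεcdef
  set φ := fun z : ℕ → M => Real.log (h c z) - c * V z with hφdef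
  set B := c * (ε / 4) with hBdef
  have hφB : ∀ z, |φ z| ≤ B := by
    intro z
    have h1 := hN₀ c hcN z
    rw [div_lt_iff₀ hc0] at h1
    rw [hBdef]
    nlinarith [abs_nonneg (Real.log (h c z) - c * V z)]
  have hfc : Continuous f := holder_continuous hdiam hθ hf
  have hVc : Continuous V := hV.1
  have hhc : Continuous (h c) := hhcont c hc0
  have hφc : Continuous φ := (hhc.log fun z => (hhpos c hc0 z).ne').sub
    (continuous_const.mul hVc)
  have hRc : Continuous fun z => c * Rminus f V z := by
    unfold Rminus
    exact continuous_const.mul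
      (((hfc.add hVc).sub (hVc.comp continuous_shift)).sub continuous_const)
  have hgc : Continuous (g c) := by
    have hgeq : g c = fun z => c * f z + Real.log (h c z) - Real.log (h c (shift z))
        - Real.log (βc c) := funext (hg c hc0)
    rw [hgeq]
    exact (((continuous_const.mul hfc).add
      (hhc.log fun z => (hhpos c hc0 z).ne')).sub
      ((hhc.comp continuous_shift).log fun z => (hhpos c hc0 (shift z)).ne')).sub
      continuous_const
  have hRg : ∀ a y, (fun z => c * Rminus f V z) (cons a y)
      = g c (cons a y) + φ y - φ (cons a y) + εc := by
    intro a y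
    simp only [hg c hc0 (cons a y), Rminus, shift_cons, hφdef, hεcdef]
    ring
  have hnorm' : ∀ y, ∫ a, Real.exp (g c (cons a y)) ∂m = 1 := by
    intro y
    have := hnorm c hc0 y
    simpa [Ruelle] using this
  obtain ⟨-, hb⟩ := key m (fun z => c * Rminus f V z) (g c) φ εc B
    hRc hgc hφc hφB hRg hnorm' n
  obtain ⟨hlow, hup⟩ := hb x
  set W := (Ruelle m (fun z => c * Rminus f V z))^[n] (fun _ => 1) x with hWdef
  have hWpos : 0 < W := lt_of_lt_of_le (Real.exp_pos _) hlow
  have hlog1 : (n : ℝ) * εc + φ x - B ≤ Real.log W :=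
    (Real.le_log_iff_exp_le hWpos).mpr hlow
  have hlog2 : Real.log W ≤ (n : ℝ) * εc + φ x + B :=
    (Real.log_le_iff_le_exp hWpos).mpr hup
  obtain ⟨hp1, hp2⟩ := abs_le.mp (hφB x)
  have habs : |Real.log W - (n : ℝ) * εc| ≤ 2 * B := by
    rw [abs_le]; constructor <;> linarith
  have heq : 1 / c * Real.log W - (n : ℝ) * εc / c - 0 = (Real.log W - (n : ℝ) * εc) / c := by
    ring
  rw [heq, abs_div, abs_of_pos hc0]
  calc |Real.log W - (n : ℝ) * εc| / c ≤ 2 * B / c := by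
        exact div_le_div_of_nonneg_right habs hc0.le
    _ = ε / 2 := by rw [hBdef]; field_simp; ring
    _ < ε := by linarith


end GXY
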